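/- Let L be a number field of degree d over ℚ, let q ≥ 1 be an integer, and let π₁, …, πₙ ∈ O_L be Weil q-numbers. Let a = (a₁, …, aₙ) and b = (b₁, …, bₙ) be tuples of nonnegative integers, set M := max(a₁ + ⋯ + aₙ, b₁ + ⋯ + bₙ), let λ be a nonzero prime ideal of O_L, and let m be a nonnegative integer with N(λ)^{2m} > 4^{d} · q^{d·M}, where N(λ) is the absolute norm of λ. If ∏_{i=1}^{n} πᵢ^{aᵢ} − ∏_{i=1}^{n} πᵢ^{bᵢ} ∈ λ^{m}, then ∏_{i=1}^{n} πᵢ^{aᵢ} = ∏_{i=1}^{n} πᵢ^{bᵢ}. -/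

import Mathlib

open NumberField

lemma prod_abs_embeddings {L : Type*} [Field L] [NumberField L] (x : L) :
    ∏ φ : L →+* ℂ, ‖φ x‖ = |Algebra.norm ℚ x| := by
  have h := congr_arg (fun z : ℂ => ‖z‖) (Algebra.norm_eq_prod_embeddings ℚ ℂ (x := x))
  rw [norm_prod] at h
  rw [← Fintype.prod_equiv (RingHom.equivRatAlgHom L ℂ) (fun φ => ‖φ x‖)
      (fun σ => ‖σ x‖) (fun _ => by simp [RingHom.equivRatAlgHom_apply])] at h
  rw [← h, eq_ratCast, Rat.cast_abs, ← Real.norm_eq_abs, ← Complex.norm_real, Complex.ofReal_ratCast]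

/-- If the difference of two monomials in Weil `q`-numbers lies in `λ^m` for a nonzero
prime ideal `λ` with `N(λ)^{2m} > 4^d · q^{d·M}`, then the two monomials are equal. -/
theorem weil_monomials_eq_of_congruence
    {L : Type*} [Field L] [NumberField L]
    (q : ℕ) (hq : 1 ≤ q) (n : ℕ) (π : Fin n → 𝓞 L)
    (hweil : ∀ i, ∀ ι : L →+* ℂ, ‖ι (π i : L)‖ ^ 2 = q)
    (a b : Fin n → ℕ)
    (lam : Ideal (𝓞 L)) (hlam_ne : lam ≠ ⊥) (hlam_prime : lam.IsPrime)
    (m : ℕ)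
    (hnorm : 4 ^ (Module.finrank ℚ L)
        * q ^ (Module.finrank ℚ L * max (∑ i, a i) (∑ i, b i))
      < Ideal.absNorm lam ^ (2 * m))
    (hmem : (∏ i, π i ^ a i - ∏ i, π i ^ b i) ∈ lam ^ m) :
    ∏ i, π i ^ a i = ∏ i, π i ^ b i := by
  by_contra hne
  set d := Module.finrank ℚ L with hd
  set M := max (∑ i, a i) (∑ i, b i) with hM
  set x : 𝓞 L := ∏ i, π i ^ a i - ∏ i, π i ^ b i with hx
  have hx0 : x ≠ 0 := sub_ne_zero.mpr hne
  -- divisibility lower bound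
  have hdvd : Ideal.absNorm (lam ^ m) ∣ Ideal.absNorm (Ideal.span {x}) :=
    Ideal.absNorm_dvd_absNorm_of_le ((Ideal.span_singleton_le_iff_mem _).mpr hmem)
  have hne0 : Ideal.absNorm (Ideal.span {x}) ≠ 0 := by
    rw [Ne, Ideal.absNorm_eq_zero_iff, Ideal.span_singleton_eq_bot]; exact hx0
  have hle : Ideal.absNorm lam ^ m ≤ Ideal.absNorm (Ideal.span {x}) := by
    rw [← map_pow]; exact Nat.le_of_dvd (Nat.pos_of_ne_zero hne0) hdvd
  -- relate absNorm to the field norm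
  have hNeq : (Ideal.absNorm (Ideal.span {x}) : ℝ) = |(Algebra.norm ℚ (x : L) : ℝ)| := by
    rw [Ideal.absNorm_span_singleton, ← Algebra.coe_norm_int]
    push_cast
    rw [Nat.cast_natAbs]
    push_cast
    rfl
  -- monomial archimedean value
  have key : ∀ (c : Fin n → ℕ) (φ : L →+* ℂ),
      ‖φ ((∏ i, π i ^ c i : 𝓞 L) : L)‖ ^ 2 = (q : ℝ) ^ (∑ i, c i) := by
    intro c φ
    push_cast
    rw [map_prod, norm_prod, ← Finset.prod_pow, ← Finset.prod_pow_eq_pow_sum]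
    refine Finset.prod_congr rfl fun i _ => ?_
    rw [map_pow, norm_pow, ← pow_mul, mul_comm (c i) 2, pow_mul, hweil i φ]
  -- per-embedding bound
  have habs : ∀ φ : L →+* ℂ, ‖φ (x : L)‖ ^ 2 ≤ 4 * (q : ℝ) ^ M := by
    intro φ
    have hqM : ∀ c : Fin n → ℕ, (∑ i, c i) ≤ M →
        ‖φ ((∏ i, π i ^ c i : 𝓞 L) : L)‖ ^ 2 ≤ (q : ℝ) ^ M := by
      intro c hc
      rw [key c φ]
      exact pow_le_pow_right₀ (by exact_mod_cast hq) hc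
    have hA := hqM a (le_max_left _ _)
    have hB := hqM b (le_max_right _ _)
    have hxL : (x : L) = ((∏ i, π i ^ a i : 𝓞 L) : L) - ((∏ i, π i ^ b i : 𝓞 L) : L) := by
      rw [hx]; push_cast; ring
    rw [hxL, map_sub]
    set u := ‖φ ((∏ i, π i ^ a i : 𝓞 L) : L)‖
    set v := ‖φ ((∏ i, π i ^ b i : 𝓞 L) : L)‖
    have htri : ‖φ ((∏ i, π i ^ a i : 𝓞 L) : L)
        - φ ((∏ i, π i ^ b i : 𝓞 L) : L)‖ ≤ u + v :=
      norm_sub_le _ _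
    have h0 : 0 ≤ ‖φ ((∏ i, π i ^ a i : 𝓞 L) : L)
        - φ ((∏ i, π i ^ b i : 𝓞 L) : L)‖ := norm_nonneg _
    nlinarith [sq_nonneg (u - v), norm_nonneg
      (φ ((∏ i, π i ^ a i : 𝓞 L) : L)), norm_nonneg
      (φ ((∏ i, π i ^ b i : 𝓞 L) : L))]
  -- global archimedean bound
  have hnormbound : |(Algebra.norm ℚ (x : L) : ℝ)| ^ 2 ≤ (4 * (q : ℝ) ^ M) ^ d := by
    have h1 : |(Algebra.norm ℚ (x : L) : ℝ)| = ∏ φ : L →+* ℂ, ‖φ (x : L)‖ := by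
      rw [prod_abs_embeddings]
      rw [Rat.cast_abs]
    rw [h1, ← Finset.prod_pow]
    calc ∏ φ : L →+* ℂ, ‖φ (x : L)‖ ^ 2
        ≤ ∏ _φ : L →+* ℂ, (4 * (q : ℝ) ^ M) := by
          apply Finset.prod_le_prod (fun φ _ => sq_nonneg _) (fun φ _ => habs φ)
      _ = (4 * (q : ℝ) ^ M) ^ d := by
          rw [Finset.prod_const, Finset.card_univ, NumberField.Embeddings.card L ℂ]
  -- combine
  have hfinal : (Ideal.absNorm lam : ℝ) ^ (2 * m) ≤ 4 ^ d * (q : ℝ) ^ (d * M) := by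
    calc (Ideal.absNorm lam : ℝ) ^ (2 * m)
        = ((Ideal.absNorm lam : ℝ) ^ m) ^ 2 := by rw [← pow_mul, mul_comm]
      _ ≤ (Ideal.absNorm (Ideal.span {x}) : ℝ) ^ 2 := by
          apply pow_le_pow_left₀ (by positivity)
          exact_mod_cast hle
      _ = |(Algebra.norm ℚ (x : L) : ℝ)| ^ 2 := by rw [hNeq]
      _ ≤ (4 * (q : ℝ) ^ M) ^ d := hnormbound
      _ = 4 ^ d * (q : ℝ) ^ (d * M) := by rw [mul_pow, ← pow_mul, mul_comm M d]
  have : (4 ^ d * q ^ (d * M) : ℝ) < (Ideal.absNorm lam : ℝ) ^ (2 * m) := by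
    exact_mod_cast hnorm
  linarith
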